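/- The oblique projector E_WZ := P_W(I - Z X^{-1} Z^T P_W^perp), where P_W = W W^T, P_W^perp = I - P_W, and X = Z^T P_W^perp Z, satisfies the alternative representation E_WZ = W (W^T P_Z^perp W)^{-1} W^T P_Z^perp, where P_Z = Z Z^T and P_Z^perp = I - P_Z. -/

import Mathlib

open Matrix

theorem oblique_projector_alt_representation {N P L : ℕ}
    (W : Matrix (Fin N) (Fin P) ℝ) (Z : Matrix (Fin N) (Fin L) ℝ)
    (hW : Wᵀ * W = 1) (hZ : Zᵀ * Z = 1)
    (hrank : (fromCols W Z).rank = P + L)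
    (hX : IsUnit (Zᵀ * (1 - W * Wᵀ) * Z))
    (hY : IsUnit (Wᵀ * (1 - Z * Zᵀ) * W)) :
    (W * Wᵀ) * (1 - Z * (Zᵀ * (1 - W * Wᵀ) * Z)⁻¹ * Zᵀ * (1 - W * Wᵀ)) =
      W * (Wᵀ * (1 - Z * Zᵀ) * W)⁻¹ * Wᵀ * (1 - Z * Zᵀ) := by
  have hW' : ∀ {k : ℕ} (M : Matrix (Fin P) (Fin k) ℝ), Wᵀ * (W * M) = M := by
    intro k M; rw [← Matrix.mul_assoc, hW, Matrix.one_mul]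
  have hZ' : ∀ {k : ℕ} (M : Matrix (Fin L) (Fin k) ℝ), Zᵀ * (Z * M) = M := by
    intro k M; rw [← Matrix.mul_assoc, hZ, Matrix.one_mul]
  set X := Zᵀ * (1 - W * Wᵀ) * Z with hXdef
  set Y := Wᵀ * (1 - Z * Zᵀ) * W with hYdef
  have hXd : IsUnit X.det := (Matrix.isUnit_iff_isUnit_det _).mp hX
  have hYd : IsUnit Y.det := (Matrix.isUnit_iff_isUnit_det _).mp hY
  have key : Y * (Wᵀ * Z) = (Wᵀ * Z) * X := by
    simp only [hXdef, hYdef, Matrix.mul_sub, Matrix.sub_mul, Matrix.mul_one,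
      Matrix.one_mul, Matrix.mul_assoc, hW', hZ', hW, hZ]
  have key2 : Y * (Wᵀ * Z) * X⁻¹ = Wᵀ * Z := by
    rw [key, Matrix.mul_assoc, Matrix.mul_nonsing_inv _ hXd, Matrix.mul_one]
  have main : Y * (Wᵀ * (1 - Z * X⁻¹ * Zᵀ * (1 - W * Wᵀ))) = Wᵀ * (1 - Z * Zᵀ) := by
    have expand : Wᵀ * (1 - Z * X⁻¹ * Zᵀ * (1 - W * Wᵀ)) =
        Wᵀ - (Wᵀ * Z) * (X⁻¹ * (Zᵀ * (1 - W * Wᵀ))) := by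
      simp only [Matrix.mul_sub, Matrix.mul_one, Matrix.mul_assoc]
    rw [expand, Matrix.mul_sub, ← Matrix.mul_assoc, ← Matrix.mul_assoc, key2]
    simp only [hYdef, Matrix.mul_sub, Matrix.sub_mul, Matrix.mul_one,
      Matrix.one_mul, Matrix.mul_assoc, hW', hZ', hW, hZ]
    abel
  have step : Wᵀ * (1 - Z * X⁻¹ * Zᵀ * (1 - W * Wᵀ)) = Y⁻¹ * (Wᵀ * (1 - Z * Zᵀ)) := by
    rw [← main, ← Matrix.mul_assoc, Matrix.nonsing_inv_mul _ hYd, Matrix.one_mul]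
  calc (W * Wᵀ) * (1 - Z * X⁻¹ * Zᵀ * (1 - W * Wᵀ))
      = W * (Wᵀ * (1 - Z * X⁻¹ * Zᵀ * (1 - W * Wᵀ))) := by rw [Matrix.mul_assoc]
    _ = W * (Y⁻¹ * (Wᵀ * (1 - Z * Zᵀ))) := by rw [step]
    _ = W * Y⁻¹ * Wᵀ * (1 - Z * Zᵀ) := by simp only [Matrix.mul_assoc]
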